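/- For every integer n, the constant Laurent polynomial n lies in the ideal of ℤ[t^{±1}] generated by t−2 and 2t−1 if and only if 3 divides n. In other words, the intersection of the ideal (t−2, 2t−1) ⊆ ℤ[t^{±1}] with the image of ℤ (the constants) is exactly the multiples of 3. -/

import Mathlib

open LaurentPolynomial

local notation "R" => LaurentPolynomial ℤ

noncomputable def tL : LaurentPolynomial ℤ := LaurentPolynomial.T 1

noncomputable def phi3 : LaurentPolynomial ℤ →ₐ[ℤ] ZMod 3 :=
  AddMonoidAlgebra.lift ℤ (ZMod 3) ℤ
    ((Units.coeHom (ZMod 3)).comp (zpowersHom (ZMod 3)ˣ (-1)))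

lemma phi3_T (m : ℤ) : phi3 (LaurentPolynomial.T m) = (-1 : ZMod 3) ^ m := by
  simp only [phi3, LaurentPolynomial.T, AddMonoidAlgebra.lift_single, one_smul,
    MonoidHom.coe_comp, Function.comp_apply, zpowersHom_apply, Units.coeHom_apply]
  push_cast
  rfl

theorem constant_in_span_t_sub_two_two_t_sub_one_iff_three_dvd (n : ℤ) :
    (n : R) ∈ (Ideal.span {tL - 2, 2 * tL - 1} : Ideal R) ↔ (3 : ℤ) ∣ n := by
  constructor
  · intro h
    have hker : (Ideal.span {tL - 2, 2 * tL - 1} : Ideal R) ≤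
        RingHom.ker (phi3.toRingHom) := by
      rw [Ideal.span_le]
      intro x hx
      simp only [Set.mem_insert_iff, Set.mem_singleton_iff] at hx
      have ht : phi3 tL = -1 := by simpa [tL] using phi3_T 1
      rcases hx with rfl | rfl <;>
        simp [RingHom.mem_ker, map_sub, map_mul, ht, map_ofNat] <;> decide
    have := hker h
    rw [RingHom.mem_ker] at this
    have h2 : ((n : ℤ) : ZMod 3) = 0 := by
      simpa using this
    exact (ZMod.intCast_zmod_eq_zero_iff_dvd n 3).mp h2
  · rintro ⟨k, rfl⟩
    have h3 : (3 : R) ∈ (Ideal.span {tL - 2, 2 * tL - 1} : Ideal R) := by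
      have : (3 : R) = (2 * tL - 1) - 2 * (tL - 2) := by ring
      rw [this]
      exact sub_mem (Ideal.subset_span (by simp))
        (Ideal.mul_mem_left _ _ (Ideal.subset_span (by simp)))
    have : ((3 * k : ℤ) : R) = (3 : R) * (k : R) := by push_cast; ring
    rw [this]
    exact Ideal.mul_mem_right _ _ h3
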